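/- Let F be a field of characteristic 0 and let x_1, …, x_n ∈ F. Then x_1^m + x_2^m + ⋯ + x_n^m = (x_1 + x_2 + ⋯ + x_n)^m for all positive integers m if and only if x_j·x_k = 0 for all j ≠ k with j, k ∈ {1,…,n}. -/

import Mathlib

open Matrix Kronecker

/-- The partial determinant `det₁`: for `A ∈ M_{mn}(F) = M_m(F) ⊗ M_n(F)`,
`det1 A` is the `n × n` matrix whose `(i,j)` entry is the determinant of the
block `A_{ij} ∈ M_m(F)` given by `(A_{ij})_{kl} = A (k,i) (l,j)`. -/
def det1 {F : Type*} [Field F] {m n : ℕ}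
    (A : Matrix (Fin m × Fin n) (Fin m × Fin n) F) : Matrix (Fin n) (Fin n) F :=
  Matrix.of fun i j => Matrix.det (Matrix.of fun k l : Fin m => A (k, i) (l, j))

/-- The `m`-th Hadamard (entrywise) power of a matrix. -/
def hpow {F : Type*} [Monoid F] {n : ℕ} (B : Matrix (Fin n) (Fin n) F) (m : ℕ) :
    Matrix (Fin n) (Fin n) F :=
  Matrix.of fun i j => (B i j) ^ m


open Finset MvPolynomial
set_option maxRecDepth 4000

/-- If all positive power sums of a finite family vanish (char 0), then all
elementary symmetric functions `esymm k`, `k ≥ 1`, vanish at that family. -/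
lemma eval_esymm_eq_zero {F : Type*} [Field F] [CharZero F] {ι : Type*} [Fintype ι]
    [DecidableEq ι] (y : ι → F) (h : ∀ m : ℕ, 0 < m → ∑ i, y i ^ m = 0)
    (k : ℕ) (hk : 0 < k) : MvPolynomial.eval y (MvPolynomial.esymm ι F k) = 0 := by
  have hN := congrArg (MvPolynomial.eval y) (MvPolynomial.mul_esymm_eq_sum ι F k)
  simp only [_root_.map_mul, map_sum, map_pow, map_neg, _root_.map_one, map_natCast] at hN
  have hzero : ∀ a ∈ Finset.HasAntidiagonal.antidiagonal k |>.filter (fun a => a.1 < k),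
      (-1 : F) ^ a.1 * MvPolynomial.eval y (esymm ι F a.1) *
        MvPolynomial.eval y (psum ι F a.2) = 0 := by
    intro a ha
    simp only [Finset.mem_filter, Finset.HasAntidiagonal.mem_antidiagonal] at ha
    have ha2 : 0 < a.2 := by omega
    have : MvPolynomial.eval y (psum ι F a.2) = 0 := by
      simpa [psum, map_sum] using h a.2 ha2
    simp [this]
  rw [Finset.sum_eq_zero hzero] at hN
  simp only [mul_zero] at hN
  have hkF : (k : F) ≠ 0 := Nat.cast_ne_zero.mpr hk.ne'
  exact (mul_eq_zero.mp hN).resolve_left hkF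

/-- If all positive power sums of a finite family vanish (char 0), then every
member of the family is zero. -/
lemma eq_zero_of_sum_pow_eq_zero {F : Type*} [Field F] [CharZero F] {ι : Type*} [Fintype ι]
    [DecidableEq ι] (y : ι → F) (h : ∀ m : ℕ, 0 < m → ∑ i, y i ^ m = 0) (i : ι) :
    y i = 0 := by
  set z : ι → F := fun j => -y j with hz
  have hzsum : ∀ m : ℕ, 0 < m → ∑ j, z j ^ m = 0 := by
    intro m hm
    have e : ∑ j, z j ^ m = (-1) ^ m * ∑ j, y j ^ m := by
      rw [Finset.mul_sum]
      refine Finset.sum_congr rfl fun j _ => ?_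
      rw [hz, neg_pow]
    rw [e, h m hm, mul_zero]
  have hE : ∀ k : ℕ, 0 < k → ((Finset.univ.val.map z).esymm k) = 0 := by
    intro k hk
    have := eval_esymm_eq_zero z hzsum k hk
    rw [Finset.esymm_map_val]
    simpa [esymm, eval_prod] using this
  have hvieta := Multiset.prod_X_add_C_eq_sum_esymm (Finset.univ.val.map z)
  have hcard : Multiset.card (Finset.univ.val.map z) = Fintype.card ι := by simp
  rw [hcard] at hvieta
  have hLHS : (Multiset.map (fun r => Polynomial.X + Polynomial.C r)
      (Finset.univ.val.map z)).prod = ∏ j : ι, (Polynomial.X + Polynomial.C (z j)) := by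
    rw [Multiset.map_map]; rfl
  rw [hLHS] at hvieta
  have := congrArg (Polynomial.eval (y i)) hvieta
  simp only [Polynomial.eval_prod, Polynomial.eval_add, Polynomial.eval_X, Polynomial.eval_C,
    Polynomial.eval_finset_sum, Polynomial.eval_mul, Polynomial.eval_pow] at this
  have hfac : y i + z i = 0 := by simp [hz]
  rw [Finset.prod_eq_zero (Finset.mem_univ i) hfac] at this
  have hRHS : ∑ j ∈ Finset.range (Fintype.card ι + 1),
      (Finset.univ.val.map z).esymm j * y i ^ (Fintype.card ι - j) = y i ^ Fintype.card ι := by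
    rw [Finset.sum_range_succ']
    have h1 : ∀ j ∈ Finset.range (Fintype.card ι),
        (Finset.univ.val.map z).esymm (j + 1) * y i ^ (Fintype.card ι - (j + 1)) = 0 := by
      intro j _
      rw [hE (j + 1) (Nat.succ_pos j), zero_mul]
    rw [Finset.sum_eq_zero h1]
    simp [Multiset.esymm]
  rw [hRHS] at this
  have hne : Nonempty ι := ⟨i⟩
  have hn : Fintype.card ι ≠ 0 := Fintype.card_ne_zero (α := ι)
  exact pow_eq_zero_iff hn |>.mp this.symm

/-- Over a field of characteristic zero, `p_m(x) = e_1(x)^m` for all `m ≥ 1`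
iff the `x_j` are pairwise "orthogonal": `x_j x_k = 0` for `j ≠ k`. -/
theorem powerSum_eq_sum_pow_iff {F : Type*} [Field F] [CharZero F] {n : ℕ}
    (x : Fin n → F) :
    (∀ m : ℕ, 0 < m → ∑ i, x i ^ m = (∑ i, x i) ^ m) ↔
      ∀ j k, j ≠ k → x j * x k = 0 := by
  constructor
  · intro h j k hjk
    -- off-diagonal power sums vanish
    have key : ∀ m : ℕ, 0 < m →
        ∑ p ∈ Finset.univ.filter (fun p : Fin n × Fin n => p.1 ≠ p.2),
          (x p.1 * x p.2) ^ m = 0 := by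
      intro m hm
      have h1 := h m hm
      have h2 := h (2 * m) (by omega)
      have expand : (∑ i, x i ^ m) * (∑ i, x i ^ m)
          = ∑ p : Fin n × Fin n, x p.1 ^ m * x p.2 ^ m := by
        rw [Finset.sum_mul_sum]
        exact (Fintype.sum_prod_type (fun p : Fin n × Fin n => x p.1 ^ m * x p.2 ^ m)).symm
      have split := Finset.sum_filter_add_sum_filter_not Finset.univ
        (fun p : Fin n × Fin n => p.1 = p.2) (fun p => x p.1 ^ m * x p.2 ^ m)
      have diag : ∑ p ∈ Finset.univ.filter (fun p : Fin n × Fin n => p.1 = p.2),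
          x p.1 ^ m * x p.2 ^ m = ∑ i, x i ^ (2 * m) := by
        rw [Finset.sum_filter, Fintype.sum_prod_type]
        simp [Finset.sum_ite_eq, two_mul, pow_add]
      have hoff : ∑ p ∈ Finset.univ.filter (fun p : Fin n × Fin n => ¬ p.1 = p.2),
          x p.1 ^ m * x p.2 ^ m = 0 := by
        have : (∑ i, x i) ^ (2 * m) = (∑ i, x i) ^ m * (∑ i, x i) ^ m := by
          rw [two_mul, pow_add]
        have e := split
        rw [diag, ← expand, h1, ← this, ← h2] at e
        exact add_eq_left.mp e
      calc ∑ p ∈ Finset.univ.filter (fun p : Fin n × Fin n => p.1 ≠ p.2),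
            (x p.1 * x p.2) ^ m
          = ∑ p ∈ Finset.univ.filter (fun p : Fin n × Fin n => ¬ p.1 = p.2),
            x p.1 ^ m * x p.2 ^ m := by
            refine Finset.sum_congr rfl fun p _ => mul_pow _ _ _
        _ = 0 := hoff
    -- apply the vanishing-power-sums lemma on the off-diagonal subtype
    have hzero := eq_zero_of_sum_pow_eq_zero
      (ι := {p : Fin n × Fin n // p.1 ≠ p.2}) (fun p => x p.1.1 * x p.1.2)
      (by
        intro m hm
        exact Eq.trans (Finset.sum_subtype (Finset.univ.filter
          (fun p : Fin n × Fin n => p.1 ≠ p.2)) (fun p => by simp)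
          (fun p : Fin n × Fin n => (x p.1 * x p.2) ^ m)).symm (key m hm))
      ⟨(j, k), hjk⟩
    exact hzero
  · intro hx m hm
    induction m, hm using Nat.le_induction with
    | base => simp
    | succ m hm ih =>
      have hoff : ∀ i j : Fin n, i ≠ j → x i ^ m * x j = 0 := by
        intro i j hij
        obtain ⟨k, rfl⟩ := Nat.exists_eq_add_of_le hm
        rw [pow_add, pow_one, mul_comm (x i) (x i ^ k), mul_assoc, hx i j hij, mul_zero]
      have expand : (∑ i, x i ^ m) * (∑ i, x i)
          = ∑ p : Fin n × Fin n, x p.1 ^ m * x p.2 := by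
        rw [Finset.sum_mul_sum]
        exact (Fintype.sum_prod_type (fun p : Fin n × Fin n => x p.1 ^ m * x p.2)).symm
      have : ∑ p : Fin n × Fin n, x p.1 ^ m * x p.2 = ∑ i, x i ^ (m + 1) := by
        rw [Fintype.sum_prod_type]
        refine Finset.sum_congr rfl fun i _ => ?_
        rw [Finset.sum_eq_single i (fun j _ hji => hoff i j (Ne.symm hji)) (by simp)]
        rw [pow_succ]
      rw [pow_succ, ← ih, expand, this]
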